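/- Let E and F be semilattices with zero and let h : E → F be a homomorphism of semilattices with zero. Then the following are equivalent: (i) for every tight character ψ on F, the composition ψ ∘ h is nonzero (hence a character on E); (ii) for every f ∈ F there exists a finite set C ⊆ E such that {f ∧ h(e) : e ∈ C} is a cover for f. -/

import Mathlib

/-- A finite subset `C` is a cover for `f`: every `c ∈ C` satisfies `c ≤ f` and every
nonzero `g ≤ f` meets some `c ∈ C`. -/
def IsCover {E : Type*} [SemilatticeInf E] [OrderBot E] (C : Finset E) (f : E) : Prop :=
  (∀ c ∈ C, c ≤ f) ∧ ∀ g : E, g ≠ ⊥ → g ≤ f → ∃ c ∈ C, g ⊓ c ≠ ⊥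

/-- The (finite) family `{v i : i ∈ C}` is a cover for `f`. -/
def IsCoverFam {ι : Type*} {E : Type*} [SemilatticeInf E] [OrderBot E]
    (C : Finset ι) (v : ι → E) (f : E) : Prop :=
  (∀ i ∈ C, v i ≤ f) ∧ ∀ g : E, g ≠ ⊥ → g ≤ f → ∃ i ∈ C, g ⊓ v i ≠ ⊥

/-- A character on a semilattice with zero: a multiplicative `{0,1}`-valued map sending
`0` to `0` and not identically zero. -/
def IsChar {E : Type*} [SemilatticeInf E] [OrderBot E] (φ : E → Bool) : Prop :=
  φ ⊥ = false ∧ (∀ e f : E, φ (e ⊓ f) = (φ e && φ f)) ∧ ∃ e : E, φ e = true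

/-- A tight character: a character such that, for every `f` and every cover `C` for `f`,
`φ f = max_{c ∈ C} φ c`. -/
def IsTightChar {E : Type*} [SemilatticeInf E] [OrderBot E] (φ : E → Bool) : Prop :=
  IsChar φ ∧ ∀ f : E, ∀ C : Finset E, IsCover C f → (φ f = true ↔ ∃ c ∈ C, φ c = true)

/-- A filter on a semilattice with zero. -/
def IsFilterOn {E : Type*} [SemilatticeInf E] [OrderBot E] (ξ : Set E) : Prop :=
  ξ.Nonempty ∧ ⊥ ∉ ξ ∧ (∀ e ∈ ξ, ∀ f ∈ ξ, e ⊓ f ∈ ξ) ∧ ∀ e ∈ ξ, ∀ f : E, e ≤ f → f ∈ ξ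

/-- A tight filter: whenever `C` is a cover for some `f ∈ ξ`, some element of `C` lies in `ξ`. -/
def IsTightFilter {E : Type*} [SemilatticeInf E] [OrderBot E] (ξ : Set E) : Prop :=
  IsFilterOn ξ ∧ ∀ f ∈ ξ, ∀ C : Finset E, IsCover C f → ∃ c ∈ C, c ∈ ξ

/-- The tight order: `e` is tightly below `f` iff there is no nonzero `g ≤ e` with `g ⊓ f = ⊥`. -/
def TightBelow {E : Type*} [SemilatticeInf E] [OrderBot E] (e f : E) : Prop :=
  ¬ ∃ g : E, g ≠ ⊥ ∧ g ≤ e ∧ g ⊓ f = ⊥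

/-- Tight equivalence. -/
def TightEquiv {E : Type*} [SemilatticeInf E] [OrderBot E] (e f : E) : Prop :=
  TightBelow e f ∧ TightBelow f e

/-- A homomorphism is tightly injective if it reflects tight equivalence. -/
def TightlyInjective {E F : Type*} [SemilatticeInf E] [OrderBot E] [SemilatticeInf F] [OrderBot F]
    (h : E → F) : Prop :=
  ∀ e₁ e₂ : E, TightEquiv (h e₁) (h e₂) → TightEquiv e₁ e₂

/-- A homomorphism is tightly surjective if its range is a large subset of the codomain:
for every `f` there is a finite `C ⊆ E` with `h e ≼ f` for all `e ∈ C` and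
`{f ⊓ h e : e ∈ C}` a cover for `f`. -/
def TightlySurjective {E F : Type*} [SemilatticeInf E] [OrderBot E] [SemilatticeInf F] [OrderBot F]
    (h : E → F) : Prop :=
  ∀ f : F, ∃ C : Finset E, (∀ e ∈ C, TightBelow (h e) f) ∧ IsCoverFam C (fun e => f ⊓ h e) f

/-- A homomorphism of semilattices with zero is tight if it satisfies conditions
(4.1.ii) and (4.3.ii) of the paper. -/
def IsTightHom {E F : Type*} [SemilatticeInf E] [OrderBot E] [SemilatticeInf F] [OrderBot F]
    (h : E → F) : Prop :=
  (∀ f : F, ∃ C : Finset E, IsCoverFam C (fun e => f ⊓ h e) f) ∧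
  (∀ e : E, ∀ C : Finset E, IsCover C e → IsCoverFam C h (h e))


/-- `x` is free (w.r.t. `h`) if for every finite `C ⊆ E` there is a nonzero part of `x`
disjoint from all `h e`, `e ∈ C`. -/
def FreeOf {E F : Type*} [SemilatticeInf E] [OrderBot E] [SemilatticeInf F] [OrderBot F]
    (h : E → F) (x : F) : Prop :=
  ∀ C : Finset E, ∃ g : F, g ≠ ⊥ ∧ g ≤ x ∧ ∀ e ∈ C, g ⊓ h e = ⊥

theorem freeOf_mono {E F : Type*} [SemilatticeInf E] [OrderBot E] [SemilatticeInf F] [OrderBot F]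
    {h : E → F} {x y : F} (hxy : x ≤ y) (hx : FreeOf h x) : FreeOf h y := by
  intro C
  obtain ⟨g, hg1, hg2, hg3⟩ := hx C
  exact ⟨g, hg1, hg2.trans hxy, hg3⟩

theorem exists_tight_filter_of_free {E F : Type*} [SemilatticeInf E] [OrderBot E]
    [SemilatticeInf F] [OrderBot F]
    (h : E → F) (f : F) (hf : FreeOf h f) :
    ∃ ξ : Set F, f ∈ ξ ∧ IsTightFilter ξ ∧ ∀ e : E, h e ∉ ξ := by
  classical
  set S : Set (Set F) := {ξ | f ∈ ξ ∧ (∀ x ∈ ξ, FreeOf h x) ∧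
      (∀ x ∈ ξ, ∀ y : F, x ≤ y → y ∈ ξ) ∧ (∀ x ∈ ξ, ∀ y ∈ ξ, x ⊓ y ∈ ξ)} with hS
  have hbase : {y : F | f ≤ y} ∈ S := by
    refine ⟨le_refl f, fun x hx => freeOf_mono hx hf, fun x hx y hxy => hx.trans hxy,
      fun x hx y hy => le_inf hx hy⟩
  have hzorn : ∀ c ⊆ S, IsChain (· ⊆ ·) c → c.Nonempty → ∃ ub ∈ S, ∀ s ∈ c, s ⊆ ub := by
    intro c hcS hchain hcne
    obtain ⟨ξ₀, hξ₀⟩ := hcne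
    refine ⟨⋃₀ c, ⟨⟨ξ₀, hξ₀, (hcS hξ₀).1⟩, ?_, ?_, ?_⟩, fun s hs => Set.subset_sUnion_of_mem hs⟩
    · rintro x ⟨ξ, hξ, hxξ⟩
      exact (hcS hξ).2.1 x hxξ
    · rintro x ⟨ξ, hξ, hxξ⟩ y hxy
      exact ⟨ξ, hξ, (hcS hξ).2.2.1 x hxξ y hxy⟩
    · rintro x ⟨ξ, hξ, hxξ⟩ y ⟨ζ, hζ, hyζ⟩
      rcases hchain.total hξ hζ with hle | hle
      · exact ⟨ζ, hζ, (hcS hζ).2.2.2 x (hle hxξ) y hyζ⟩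
      · exact ⟨ξ, hξ, (hcS hξ).2.2.2 x hxξ y (hle hyζ)⟩
  obtain ⟨m, hsub, hmS, hmax⟩ := zorn_subset_nonempty S hzorn _ hbase
  obtain ⟨hfm, hfree, hup, hmeet⟩ := hmS
  -- key maximality fact
  have key : ∀ c : F, c ∉ m → ∃ x ∈ m, ¬ FreeOf h (x ⊓ c) := by
    intro c hc
    by_contra hcon
    push_neg at hcon
    set m' : Set F := {y | ∃ x ∈ m, x ⊓ c ≤ y} with hm'
    have hm'S : m' ∈ S := by
      refine ⟨⟨f, hfm, inf_le_left⟩, ?_, ?_, ?_⟩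
      · rintro y ⟨x, hx, hxy⟩
        exact freeOf_mono hxy (hcon x hx)
      · rintro y ⟨x, hx, hxy⟩ z hyz
        exact ⟨x, hx, hxy.trans hyz⟩
      · rintro y ⟨x, hx, hxy⟩ z ⟨w, hw, hwz⟩
        exact ⟨x ⊓ w, hmeet x hx w hw,
          le_inf ((inf_le_inf_right c inf_le_left).trans hxy)
            ((inf_le_inf_right c inf_le_right).trans hwz)⟩
    have hmm' : m ⊆ m' := fun x hx => ⟨x, hx, inf_le_left⟩
    have : m' ⊆ m := hmax hm'S hmm'
    exact hc (this ⟨f, hfm, inf_le_right⟩)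
  -- ⊥ ∉ m
  have hbotfree : ¬ FreeOf h (⊥ : F) := by
    intro hb
    obtain ⟨g, hg1, hg2, -⟩ := hb (∅ : Finset E)
    exact hg1 (le_bot_iff.mp hg2)
  have hbot : ⊥ ∉ m := fun hb => hbotfree (hfree ⊥ hb)
  -- finite meets inside m
  have meets : ∀ (s : Finset F) (w : F → F), (∀ c ∈ s, w c ∈ m) → ∀ x ∈ m,
      ∃ y ∈ m, y ≤ x ∧ ∀ c ∈ s, y ≤ w c := by
    intro s
    induction s using Finset.induction_on with
    | empty => exact fun w _ x hx => ⟨x, hx, le_rfl, by simp⟩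
    | insert _ _ hni ih =>
      rename_i a s
      intro w hw x hx
      obtain ⟨y, hy, hyx, hys⟩ := ih w (fun c hc => hw c (Finset.mem_insert_of_mem hc)) x hx
      refine ⟨y ⊓ w a, hmeet y hy (w a) (hw a (Finset.mem_insert_self a s)),
        inf_le_left.trans hyx, ?_⟩
      intro c hc
      rcases Finset.mem_insert.mp hc with rfl | hc
      · exact inf_le_right
      · exact inf_le_left.trans (hys c hc)
  -- tightness
  have tight : ∀ x ∈ m, ∀ C : Finset F, IsCover C x → ∃ c ∈ C, c ∈ m := by
    intro x hx C hC
    by_contra hcon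
    push_neg at hcon
    choose! xw hxw1 hxw2 using fun c (hc : c ∈ C) => key c (hcon c hc)
    obtain ⟨y, hy, hyx, hyw⟩ := meets C xw hxw1 x hx
    have hyfree : FreeOf h y := hfree y hy
    have hynotfree : ∀ c ∈ C, ¬ FreeOf h (y ⊓ c) := fun c hc hyc =>
      hxw2 c hc (freeOf_mono (inf_le_inf_right c (hyw c hc)) hyc)
    have hD : ∀ c ∈ C, ∃ D : Finset E, ∀ g : F, g ≤ y ⊓ c → (∀ e ∈ D, g ⊓ h e = ⊥) → g = ⊥ := by
      intro c hc
      have := hynotfree c hc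
      unfold FreeOf at this
      push_neg at this
      obtain ⟨D, hD⟩ := this
      refine ⟨D, fun g hg1 hg2 => ?_⟩
      by_contra hgne
      obtain ⟨e, he, hne⟩ := hD g hgne hg1
      exact hne (hg2 e he)
    choose! D hDspec using hD
    obtain ⟨g, hg1, hg2, hg3⟩ := hyfree (C.biUnion D)
    obtain ⟨c, hc, hgc⟩ := hC.2 g hg1 (hg2.trans hyx)
    refine hgc (hDspec c hc (g ⊓ c) (inf_le_inf_right c hg2) ?_)
    intro e he
    have : g ⊓ c ⊓ h e ≤ g ⊓ h e := inf_le_inf_right _ inf_le_left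
    rw [hg3 e (Finset.mem_biUnion.mpr ⟨c, hc, he⟩)] at this
    exact le_bot_iff.mp this
  refine ⟨m, hfm, ⟨⟨⟨f, hfm⟩, hbot, hmeet, hup⟩, tight⟩, ?_⟩
  intro e hem
  have := hfree (h e) hem ({e} : Finset E)
  obtain ⟨g, hg1, hg2, hg3⟩ := this
  have := hg3 e (Finset.mem_singleton_self e)
  rw [inf_eq_left.mpr hg2] at this
  exact hg1 this

theorem tight_cond_one_iff {E F : Type*} [SemilatticeInf E] [OrderBot E]
    [SemilatticeInf F] [OrderBot F]
    (h : E → F) (h0 : h ⊥ = ⊥) (hinf : ∀ a b : E, h (a ⊓ b) = h a ⊓ h b) :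
    (∀ ψ : F → Bool, IsTightChar ψ → ∃ e : E, ψ (h e) = true) ↔
    (∀ f : F, ∃ C : Finset E, IsCoverFam C (fun e => f ⊓ h e) f) := by
  classical
  constructor
  · intro H f
    by_contra hno
    push_neg at hno
    have hfree : FreeOf h f := by
      intro C
      have hnc := hno C
      unfold IsCoverFam at hnc
      push_neg at hnc
      obtain ⟨g, hg1, hg2, hg3⟩ := hnc fun i _ => inf_le_left
      refine ⟨g, hg1, hg2, fun e he => ?_⟩
      have := hg3 e he
      rwa [show g ⊓ (f ⊓ h e) = g ⊓ h e by
        rw [← inf_assoc, inf_eq_left.mpr hg2]] at this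
    obtain ⟨ξ, hfξ, ⟨⟨hne, hbot, hmeet, hup⟩, htight⟩, havoid⟩ :=
      exists_tight_filter_of_free h f hfree
    set ψ : F → Bool := fun x => decide (x ∈ ξ) with hψ
    have hmem : ∀ x : F, ψ x = true ↔ x ∈ ξ := fun x => by simp [hψ]
    have hchar : IsTightChar ψ := by
      refine ⟨⟨?_, ?_, ⟨f, (hmem f).mpr hfξ⟩⟩, ?_⟩
      · simp [hψ, hbot]
      · intro a b
        by_cases hab : a ⊓ b ∈ ξ
        · have ha : a ∈ ξ := hup _ hab a inf_le_left
          have hb : b ∈ ξ := hup _ hab b inf_le_right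
          simp [hψ, hab, ha, hb]
        · have : ¬ (a ∈ ξ ∧ b ∈ ξ) := fun ⟨ha, hb⟩ => hab (hmeet a ha b hb)
          rcases Classical.em (a ∈ ξ) with ha | ha
          · have hb : b ∉ ξ := fun hb => this ⟨ha, hb⟩
            simp [hψ, hab, ha, hb]
          · simp [hψ, hab, ha]
      · intro x C hC
        constructor
        · intro hx
          obtain ⟨c, hc, hcξ⟩ := htight x ((hmem x).mp hx) C hC
          exact ⟨c, hc, (hmem c).mpr hcξ⟩
        · rintro ⟨c, hc, hcψ⟩
          exact (hmem x).mpr (hup c ((hmem c).mp hcψ) x (hC.1 c hc))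
    obtain ⟨e, he⟩ := H ψ hchar
    exact havoid e ((hmem (h e)).mp he)
  · intro H ψ hψ
    obtain ⟨⟨hbot, hmul, f, hfψ⟩, htight⟩ := hψ
    obtain ⟨C, hC1, hC2⟩ := H f
    set D : Finset F := C.image (fun e => f ⊓ h e) with hD
    have hcover : IsCover D f := by
      constructor
      · intro c hc
        obtain ⟨e, -, rfl⟩ := Finset.mem_image.mp hc
        exact inf_le_left
      · intro g hg1 hg2
        obtain ⟨i, hi, hne⟩ := hC2 g hg1 hg2
        exact ⟨f ⊓ h i, Finset.mem_image.mpr ⟨i, hi, rfl⟩, hne⟩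
    obtain ⟨c, hc, hcψ⟩ := (htight f D hcover).mp hfψ
    obtain ⟨e, -, rfl⟩ := Finset.mem_image.mp hc
    refine ⟨e, ?_⟩
    have := hmul f (h e)
    rw [hcψ] at this
    exact (Bool.and_eq_true _ _).mp this.symm |>.2
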